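/- arXiv:2209.04740 — 3 statements merged into one kernel-verified Lean document; each statement's English description precedes it below -/
import Mathlib

section
/- Let d ≥ 1 and let U_d ⊆ {0,1}^d be the configuration consisting of the single vertex (0,...,0) of Q_d. Then λ(U_d,d) ≥ ((2^d − 1)/2^d)^(2^d − 1). -/
open Filter

namespace CubeDensity

/-- The automorphism of `Q_d` given by permuting coordinates by `σ` and then
complementing the values in the coordinates where `ε` is `true`. -/
def autMap (d : ℕ) (σ : Equiv.Perm (Fin d)) (ε : Fin d → Bool) (v : Fin d → Bool) :
    Fin d → Bool :=
  fun i => xor (v (σ⁻¹ i)) (ε i)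

/-- `K` is an exact copy of `H` in `Q_d`: some automorphism of `Q_d` maps `H` onto `K`. -/
def ExactCopy (d : ℕ) (H K : Set (Fin d → Bool)) : Prop :=
  ∃ σ : Equiv.Perm (Fin d), ∃ ε : Fin d → Bool, autMap d σ ε '' H = K

/-- The vertex of `Q_n` in the sub-`d`-cube with flip coordinates `F` (and fixed values `g`
outside `F`) corresponding to the vertex `u` of `Q_d`, identifying the flip coordinates
with `Fin d` in increasing order. -/
def embed {n d : ℕ} (F : Finset (Fin n)) (hF : F.card = d) (g : Fin n → Bool)
    (u : Fin d → Bool) : Fin n → Bool :=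
  fun i => if h : i ∈ F then u ((F.orderIsoOfFin hF).symm ⟨i, h⟩) else g i

/-- The sub-`d`-cube of `Q_n` with flip coordinates `F` and fixed values `g` outside `F`
is `H`-good for `S`: the configuration induced by `S` on it is an exact copy of `H`. -/
def IsGood {n d : ℕ} (H : Set (Fin d → Bool)) (S : Set (Fin n → Bool))
    (F : Finset (Fin n)) (hF : F.card = d) (g : Fin n → Bool) : Prop :=
  ExactCopy d H {u : Fin d → Bool | embed F hF g u ∈ S}

/-- The number of `H`-good sub-`d`-cubes of `Q_n`, where a sub-`d`-cube is encoded as a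
pair `(F, g)` with `F` the `d`-element set of flip coordinates and `g` the fixed values
outside `F` (normalized to be `false` on `F`). -/
noncomputable def goodCount (d : ℕ) (H : Set (Fin d → Bool)) (n : ℕ)
    (S : Set (Fin n → Bool)) : ℕ :=
  Nat.card {p : Finset (Fin n) × (Fin n → Bool) //
    ∃ hF : p.1.card = d, (∀ i ∈ p.1, p.2 i = false) ∧ IsGood H S p.1 hF p.2}

/-- `g(H,d,n,S)`: the fraction of the `C(n,d) * 2^(n-d)` sub-`d`-cubes of `Q_n` that are
`H`-good for `S`. -/
noncomputable def gFrac (d : ℕ) (H : Set (Fin d → Bool)) (n : ℕ)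
    (S : Set (Fin n → Bool)) : ℝ :=
  (goodCount d H n S : ℝ) / ((n.choose d : ℝ) * 2 ^ (n - d))

/-- `ex(H,d,n)`: the maximum over all `S ⊆ {0,1}^n` of the fraction of `H`-good
sub-`d`-cubes. -/
noncomputable def exD (d : ℕ) (H : Set (Fin d → Bool)) (n : ℕ) : ℝ :=
  ⨆ S : Set (Fin n → Bool), gFrac d H n S

end CubeDensity

namespace CubeDensityAux

open CubeDensity Finset

attribute [local instance] Classical.propDecidable

variable {d n : ℕ}

/-- The predicate defining good pairs. -/
def goodPred (d : ℕ) (H : Set (Fin d → Bool)) {n : ℕ} (S : Set (Fin n → Bool))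
    (p : Finset (Fin n) × (Fin n → Bool)) : Prop :=
  ∃ hF : p.1.card = d, (∀ i ∈ p.1, p.2 i = false) ∧ IsGood H S p.1 hF p.2

lemma goodCount_eq_card_filter (H : Set (Fin d → Bool)) (S : Set (Fin n → Bool)) :
    goodCount d H n S = (Finset.univ.filter (goodPred d H S)).card := by
  rw [goodCount, Nat.card_eq_fintype_card, Fintype.card_subtype]
  congr!

lemma gFrac_nonneg (H : Set (Fin d → Bool)) (S : Set (Fin n → Bool)) :
    0 ≤ gFrac d H n S := by
  unfold gFrac; positivity

lemma gFrac_le_exD (H : Set (Fin d → Bool)) (S : Set (Fin n → Bool)) :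
    gFrac d H n S ≤ exD d H n :=
  le_ciSup ((Set.finite_range _).bddAbove) S

lemma exD_nonneg (H : Set (Fin d → Bool)) : 0 ≤ exD d H n :=
  le_trans (gFrac_nonneg H ∅) (gFrac_le_exD H ∅)

lemma embed_injective (F : Finset (Fin n)) (hF : F.card = d) (g : Fin n → Bool) :
    Function.Injective (embed F hF g) := by
  intro u v huv
  funext k
  set i := (F.orderIsoOfFin hF) k with hi
  have h1 : (i : Fin n) ∈ F := i.2
  have h2 := congrFun huv (i : Fin n)
  simp only [embed, dif_pos h1] at h2
  have h3 : (⟨(i : Fin n), h1⟩ : {x // x ∈ F}) = i := rfl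
  rw [h3, hi, OrderIso.symm_apply_apply] at h2
  exact h2

lemma isGood_single_iff (S : Set (Fin n → Bool)) (F : Finset (Fin n)) (hF : F.card = d)
    (g : Fin n → Bool) :
    IsGood ({fun _ => false} : Set (Fin d → Bool)) S F hF g ↔
      ∃! u : Fin d → Bool, embed F hF g u ∈ S := by
  have hmap : ∀ (σ : Equiv.Perm (Fin d)) (ε : Fin d → Bool),
      autMap d σ ε (fun _ => false) = ε := by
    intro σ ε; funext i; simp [autMap]
  constructor
  · rintro ⟨σ, ε, hσε⟩
    rw [Set.image_singleton, hmap] at hσε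
    have hmem : ∀ x, embed F hF g x ∈ S ↔ x = ε := by
      intro x
      have h2 : x ∈ ({ε} : Set (Fin d → Bool)) ↔ x ∈ {u | embed F hF g u ∈ S} := by
        rw [hσε]
      simpa using h2.symm
    exact ⟨ε, (hmem ε).2 rfl, fun u hu => (hmem u).1 hu⟩
  · rintro ⟨a, ha, hu⟩
    refine ⟨1, a, ?_⟩
    rw [Set.image_singleton, hmap]
    exact ((Set.eq_singleton_iff_unique_mem
      (a := a) (s := {u | embed F hF g u ∈ S})).2 ⟨ha, fun x hx => hu x hx⟩).symm

section Antitone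

variable {d n : ℕ}

/-- Restriction of a configuration to the hyperplane `x_j = b`. -/
def hplane (j : Fin (n + 1)) (b : Bool) (S : Set (Fin (n + 1) → Bool)) :
    Set (Fin n → Bool) :=
  {w | j.insertNth b w ∈ S}

lemma orderEmb_map (j : Fin (n + 1)) (F' : Finset (Fin n)) (hF' : F'.card = d)
    (hF : (F'.map (Fin.succAboveEmb j)).card = d) (k : Fin d) :
    (F'.map (Fin.succAboveEmb j)).orderEmbOfFin hF k
      = j.succAbove (F'.orderEmbOfFin hF' k) := by
  have h := Finset.orderEmbOfFin_unique (f := fun k => j.succAbove (F'.orderEmbOfFin hF' k))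
    hF (fun k => by
      simp only [Fin.succAboveEmb]
      exact Finset.mem_map_of_mem _ (Finset.orderEmbOfFin_mem F' hF' k))
    ((Fin.strictMono_succAbove j).comp (F'.orderEmbOfFin hF').strictMono)
  exact (congrFun h k).symm

lemma orderIso_symm_map (j : Fin (n + 1)) (F' : Finset (Fin n)) (hF' : F'.card = d)
    (hF : (F'.map (Fin.succAboveEmb j)).card = d) (k : Fin n) (hk : k ∈ F')
    (hk' : j.succAbove k ∈ F'.map (Fin.succAboveEmb j)) :
    ((F'.map (Fin.succAboveEmb j)).orderIsoOfFin hF).symm ⟨j.succAbove k, hk'⟩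
      = (F'.orderIsoOfFin hF').symm ⟨k, hk⟩ := by
  set t := (F'.orderIsoOfFin hF').symm ⟨k, hk⟩ with ht
  rw [OrderIso.symm_apply_eq]
  apply Subtype.ext
  rw [Finset.coe_orderIsoOfFin_apply, orderEmb_map j F' hF' hF t]
  have hh : F'.orderEmbOfFin hF' t = k := by
    rw [← Finset.coe_orderIsoOfFin_apply]
    have h2 := (F'.orderIsoOfFin hF').apply_symm_apply ⟨k, hk⟩
    rw [← ht] at h2
    exact congrArg Subtype.val h2
  rw [hh]

/-- Key compatibility: embedding into a sub-`d`-cube of `Q_n` then inserting a coordinate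
equals embedding into the corresponding sub-`d`-cube of `Q_{n+1}`. -/
lemma insertNth_embed (j : Fin (n + 1)) (b : Bool) (F' : Finset (Fin n)) (hF' : F'.card = d)
    (g' : Fin n → Bool) (hF : (F'.map (Fin.succAboveEmb j)).card = d) (u : Fin d → Bool) :
    Fin.insertNth (α := fun _ => Bool) j b (embed F' hF' g' u)
      = embed (F'.map (Fin.succAboveEmb j)) hF
          (Fin.insertNth (α := fun _ => Bool) j b g') u := by
  funext i
  rcases eq_or_ne i j with rfl | hij
  · rw [Fin.insertNth_apply_same]
    have hj : i ∉ F'.map (Fin.succAboveEmb i) := by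
      simp only [Finset.mem_map]
      rintro ⟨k, -, hk⟩
      exact Fin.succAbove_ne i k hk
    rw [embed, dif_neg hj, Fin.insertNth_apply_same]
  · obtain ⟨k, rfl⟩ := Fin.exists_succAbove_eq hij
    rw [Fin.insertNth_apply_succAbove]
    have hmem : j.succAbove k ∈ F'.map (Fin.succAboveEmb j) ↔ k ∈ F' :=
      Finset.mem_map' (Fin.succAboveEmb j)
    by_cases hk : k ∈ F'
    · rw [embed, dif_pos hk, embed, dif_pos (hmem.2 hk),
        orderIso_symm_map j F' hF' hF k hk (hmem.2 hk)]
    · rw [embed, dif_neg hk, embed, dif_neg (fun h => hk (hmem.1 h)),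
        Fin.insertNth_apply_succAbove]

lemma setOf_embed_hplane (S : Set (Fin (n + 1) → Bool)) (j : Fin (n + 1)) (b : Bool)
    (F' : Finset (Fin n)) (hF' : F'.card = d) (g' : Fin n → Bool)
    (hF : (F'.map (Fin.succAboveEmb j)).card = d) :
    {u : Fin d → Bool | embed F' hF' g' u ∈ hplane j b S}
      = {u : Fin d → Bool | embed (F'.map (Fin.succAboveEmb j)) hF
          (Fin.insertNth (α := fun _ => Bool) j b g') u ∈ S} := by
  ext u
  show Fin.insertNth (α := fun _ => Bool) j b (embed F' hF' g' u) ∈ S ↔ _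
  rw [insertNth_embed j b F' hF' g' hF u]
  exact Iff.rfl

lemma goodPred_hplane_iff (H : Set (Fin d → Bool)) (S : Set (Fin (n + 1) → Bool))
    (j : Fin (n + 1)) (b : Bool) (F' : Finset (Fin n)) (g' : Fin n → Bool) :
    goodPred d H (hplane j b S) (F', g')
      ↔ goodPred d H S (F'.map (Fin.succAboveEmb j),
          Fin.insertNth (α := fun _ => Bool) j b g') := by
  constructor
  · rintro ⟨hF', hnorm, hgood⟩
    have hF : (F'.map (Fin.succAboveEmb j)).card = d := by
      rw [Finset.card_map]; exact hF'
    refine ⟨hF, ?_, ?_⟩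
    · intro i hi
      simp only [Finset.mem_map] at hi
      obtain ⟨k, hk, rfl⟩ := hi
      show Fin.insertNth (α := fun _ => Bool) j b g' (j.succAbove k) = false
      rw [Fin.insertNth_apply_succAbove]
      exact hnorm k hk
    · show ExactCopy d H _
      unfold IsGood at hgood
      rw [setOf_embed_hplane S j b F' hF' g' hF] at hgood
      exact hgood
  · rintro ⟨hF, hnorm, hgood⟩
    have hF' : F'.card = d := by rw [← Finset.card_map (Fin.succAboveEmb j)]; exact hF
    refine ⟨hF', ?_, ?_⟩
    · intro k hk
      have h2 := hnorm (j.succAbove k) (Finset.mem_map_of_mem _ hk)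
      show g' k = false
      have h3 : (Fin.insertNth (α := fun _ => Bool) j b g') (j.succAbove k) = g' k :=
        Fin.insertNth_apply_succAbove (α := fun _ => Bool) j b g' k
      rw [← h3]
      exact h2
    · show ExactCopy d H _
      unfold IsGood at hgood
      rw [setOf_embed_hplane S j b F' hF' g' hF]
      exact hgood


lemma map_preimage_succAbove (j : Fin (n + 1)) (F : Finset (Fin (n + 1))) (hj : j ∉ F) :
    (F.preimage j.succAbove (Fin.succAbove_right_injective.injOn)).map (Fin.succAboveEmb j)
      = F := by
  ext i
  simp only [Finset.mem_map, Finset.mem_preimage]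
  constructor
  · rintro ⟨k, hk, rfl⟩
    exact hk
  · intro hi
    have hij : i ≠ j := fun h => hj (h ▸ hi)
    obtain ⟨k, rfl⟩ := Fin.exists_succAbove_eq hij
    exact ⟨k, hi, rfl⟩

lemma count_identity (H : Set (Fin d → Bool)) (S : Set (Fin (n + 1) → Bool)) :
    ∑ j : Fin (n + 1), ∑ b : Bool, goodCount d H n (hplane j b S)
      = (n + 1 - d) * goodCount d H (n + 1) S := by
  have hA : ∑ j : Fin (n + 1), ∑ b : Bool, goodCount d H n (hplane j b S)
      = (Finset.univ.filter (fun x : (Fin (n + 1) × Bool) × (Finset (Fin n) × (Fin n → Bool)) =>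
          goodPred d H (hplane x.1.1 x.1.2 S) x.2)).card := by
    rw [Finset.card_filter, Fintype.sum_prod_type, Fintype.sum_prod_type]
    refine Finset.sum_congr rfl fun j _ => Finset.sum_congr rfl fun b _ => ?_
    rw [goodCount_eq_card_filter, Finset.card_filter]
  have hB : (Finset.univ.filter
        (fun y : (Finset (Fin (n + 1)) × (Fin (n + 1) → Bool)) × Fin (n + 1) =>
          goodPred d H S y.1 ∧ y.2 ∉ y.1.1)).card
      = (n + 1 - d) * goodCount d H (n + 1) S := by
    rw [Finset.card_filter, Fintype.sum_prod_type]
    have hstep : ∀ p : Finset (Fin (n + 1)) × (Fin (n + 1) → Bool),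
        (∑ j : Fin (n + 1), if goodPred d H S p ∧ j ∉ p.1 then 1 else 0)
          = if goodPred d H S p then (n + 1 - d) else 0 := by
      intro p
      by_cases hp : goodPred d H S p
      · have hF : p.1.card = d := hp.choose
        simp only [hp, true_and, if_true]
        rw [Finset.sum_boole]
        have : Finset.univ.filter (fun j => j ∉ p.1) = p.1ᶜ := by
          ext j; simp
        rw [this, Finset.card_compl, hF, Fintype.card_fin, Nat.cast_id]
      · simp [hp]
    rw [Finset.sum_congr rfl fun p _ => hstep p]
    have h2 : ∀ p : Finset (Fin (n + 1)) × (Fin (n + 1) → Bool),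
        (if goodPred d H S p then (n + 1 - d) else 0)
          = (n + 1 - d) * (if goodPred d H S p then 1 else 0) := by
      intro p; split <;> simp
    rw [Finset.sum_congr rfl fun p _ => h2 p, ← Finset.mul_sum, ← Finset.card_filter,
      ← goodCount_eq_card_filter]
  rw [hA]
  rw [← hB]
  apply Finset.card_nbij'
    (i := fun x : (Fin (n + 1) × Bool) × (Finset (Fin n) × (Fin n → Bool)) =>
      ((x.2.1.map (Fin.succAboveEmb x.1.1),
        Fin.insertNth (α := fun _ => Bool) x.1.1 x.1.2 x.2.2), x.1.1))
    (j := fun y : (Finset (Fin (n + 1)) × (Fin (n + 1) → Bool)) × Fin (n + 1) =>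
      ((y.2, y.1.2 y.2),
       (y.1.1.preimage y.2.succAbove (Fin.succAbove_right_injective.injOn),
        y.2.removeNth y.1.2)))
  · rintro ⟨⟨j, b⟩, ⟨F', g'⟩⟩ hx
    simp only [Finset.mem_coe, Finset.mem_filter, Finset.mem_univ, true_and] at hx ⊢
    refine ⟨(goodPred_hplane_iff H S j b F' g').1 hx, ?_⟩
    simp only [Finset.mem_map]
    rintro ⟨k, -, hk⟩
    exact Fin.succAbove_ne j k hk
  · rintro ⟨⟨F, g⟩, j⟩ hy
    simp only [Finset.mem_coe, Finset.mem_filter, Finset.mem_univ, true_and] at hy ⊢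
    obtain ⟨hgood, hj⟩ := hy
    apply (goodPred_hplane_iff H S j (g j) _ _).2
    rw [map_preimage_succAbove j F hj]
    have : Fin.insertNth (α := fun _ => Bool) j (g j) (j.removeNth g) = g :=
      Fin.insertNth_self_removeNth j g
    rw [this]
    exact hgood
  · rintro ⟨⟨j, b⟩, ⟨F', g'⟩⟩ hx
    refine Prod.ext (Prod.ext rfl ?_) (Prod.ext ?_ ?_)
    · exact Fin.insertNth_apply_same (α := fun _ => Bool) j b g'
    · show (F'.map (Fin.succAboveEmb j)).preimage j.succAbove
        (Fin.succAbove_right_injective.injOn) = F'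
      ext k
      rw [Finset.mem_preimage]
      exact Finset.mem_map' (Fin.succAboveEmb j)
    · exact Fin.removeNth_insertNth (α := fun _ => Bool) j b g'
  · rintro ⟨⟨F, g⟩, j⟩ hy
    simp only [Finset.mem_coe, Finset.mem_filter, Finset.mem_univ, true_and] at hy
    obtain ⟨-, hj⟩ := hy
    refine Prod.ext (Prod.ext ?_ ?_) rfl
    · exact map_preimage_succAbove j F hj
    · exact Fin.insertNth_self_removeNth j g


lemma choose_id (h : d ≤ n) : (n + 1) * n.choose d = (n + 1 - d) * (n + 1).choose d := by
  have h1 := Nat.add_one_mul_choose_eq n (n - d)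
  rw [Nat.choose_symm h] at h1
  have h2 : n - d + 1 = n + 1 - d := by omega
  rw [h2] at h1
  have h3 : (n + 1).choose (n + 1 - d) = (n + 1).choose d :=
    Nat.choose_symm (by omega)
  rw [h3] at h1
  rw [h1, Nat.mul_comm]

lemma exD_succ_le (hdn : d ≤ n) (H : Set (Fin d → Bool)) :
    exD d H (n + 1) ≤ exD d H n := by
  apply ciSup_le
  intro S
  have hdenpos : (0 : ℝ) < (n.choose d : ℝ) * 2 ^ (n - d) := by
    have := Nat.choose_pos hdn
    positivity
  have hden1pos : (0 : ℝ) < ((n + 1).choose d : ℝ) * 2 ^ (n + 1 - d) := by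
    have := Nat.choose_pos (show d ≤ n + 1 by omega)
    positivity
  have hterm : ∀ (j : Fin (n + 1)) (b : Bool),
      (goodCount d H n (hplane j b S) : ℝ) ≤ exD d H n * ((n.choose d : ℝ) * 2 ^ (n - d)) := by
    intro j b
    have h1 := gFrac_le_exD H (hplane j b S)
    rw [gFrac, div_le_iff₀ hdenpos] at h1
    exact h1
  have hkey : ((n + 1 - d : ℕ) : ℝ) * (goodCount d H (n + 1) S : ℝ)
      ≤ (2 * (n + 1) : ℝ) * (exD d H n * ((n.choose d : ℝ) * 2 ^ (n - d))) := by
    have hci := count_identity H S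
    have hcast : ((n + 1 - d : ℕ) : ℝ) * (goodCount d H (n + 1) S : ℝ)
        = ∑ j : Fin (n + 1), ∑ b : Bool, (goodCount d H n (hplane j b S) : ℝ) := by
      rw [← Nat.cast_mul, ← hci]
      push_cast
      rfl
    rw [hcast]
    calc ∑ j : Fin (n + 1), ∑ b : Bool, (goodCount d H n (hplane j b S) : ℝ)
        ≤ ∑ _j : Fin (n + 1), ∑ _b : Bool,
            exD d H n * ((n.choose d : ℝ) * 2 ^ (n - d)) := by
          refine Finset.sum_le_sum fun j _ => Finset.sum_le_sum fun b _ => hterm j b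
      _ = (2 * (n + 1) : ℝ) * (exD d H n * ((n.choose d : ℝ) * 2 ^ (n - d))) := by
          simp [Finset.sum_const, Finset.card_univ, mul_comm]
          ring
  rw [gFrac, div_le_iff₀ hden1pos]
  have hsubpos : (0 : ℝ) < ((n + 1 - d : ℕ) : ℝ) := by
    have : 0 < n + 1 - d := by omega
    exact_mod_cast this
  apply le_of_mul_le_mul_left _ hsubpos
  calc ((n + 1 - d : ℕ) : ℝ) * (goodCount d H (n + 1) S : ℝ)
      ≤ (2 * (n + 1) : ℝ) * (exD d H n * ((n.choose d : ℝ) * 2 ^ (n - d))) := hkey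
    _ = ((n + 1 - d : ℕ) : ℝ) * (exD d H n * (((n + 1).choose d : ℝ) * 2 ^ (n + 1 - d))) := by
        have hid : ((n + 1 : ℕ) : ℝ) * (n.choose d : ℝ)
            = ((n + 1 - d : ℕ) : ℝ) * (((n + 1).choose d : ℕ) : ℝ) := by
          rw [← Nat.cast_mul, ← Nat.cast_mul, choose_id hdn]
        have hpow : (2 : ℝ) ^ (n + 1 - d) = 2 * 2 ^ (n - d) := by
          have : n + 1 - d = (n - d) + 1 := by omega
          rw [this, pow_succ]
          ring
        rw [hpow]
        push_cast at hid ⊢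
        linear_combination (exD d H n * (2 * 2 ^ (n - d))) * hid

end Antitone


section Counting

variable {α β W : Type*} [Fintype α] [Fintype β] [Fintype W]

lemma card_ne (w₀ : W) : Fintype.card {w : W // w ≠ w₀} = Fintype.card W - 1 := by
  have h := Fintype.card_subtype_compl (fun w : W => w = w₀)
  simpa [Fintype.card_subtype_eq] using h

/-- Functions with a unique zero exactly at `a₀` correspond to nonzero-valued functions on
the complement. -/
noncomputable def uniqueZeroEquiv (a₀ : α) (w₀ : W) :
    {f : α → W // f a₀ = w₀ ∧ ∀ b, f b = w₀ → b = a₀}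
      ≃ ({a : α // a ≠ a₀} → {w : W // w ≠ w₀}) where
  toFun f x := ⟨f.1 x.1, fun h => x.2 (f.2.2 x.1 h)⟩
  invFun k := ⟨fun a => if ha : a = a₀ then w₀ else (k ⟨a, ha⟩).1, by
    refine ⟨dif_pos rfl, fun b hb => ?_⟩
    by_contra hb'
    dsimp only at hb
    rw [dif_neg hb'] at hb
    exact (k ⟨b, hb'⟩).2 hb⟩
  left_inv f := by
    apply Subtype.ext
    funext a
    show (if ha : a = a₀ then w₀ else _) = f.1 a
    by_cases ha : a = a₀
    · subst ha
      rw [dif_pos rfl]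
      exact f.2.1.symm
    · rw [dif_neg ha]
  right_inv k := by
    funext x
    apply Subtype.ext
    show (if ha : x.1 = a₀ then w₀ else (k ⟨x.1, ha⟩).1) = (k x).1
    rw [dif_neg x.2]

lemma card_filter_existsUnique (w₀ : W) :
    (Finset.univ.filter (fun f : α → W => ∃! a, f a = w₀)).card
      = Fintype.card α * (Fintype.card W - 1) ^ (Fintype.card α - 1) := by
  have hpart : (Finset.univ.filter (fun f : α → W => ∃! a, f a = w₀))
      = Finset.univ.biUnion (fun a₀ : α => Finset.univ.filter
          (fun f : α → W => f a₀ = w₀ ∧ ∀ b, f b = w₀ → b = a₀)) := by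
    ext f
    simp only [Finset.mem_filter, Finset.mem_univ, true_and, Finset.mem_biUnion]
    constructor
    · rintro ⟨a, h1, h2⟩
      exact ⟨a, h1, h2⟩
    · rintro ⟨a, h1, h2⟩
      exact ⟨a, h1, h2⟩
  rw [hpart, Finset.card_biUnion]
  · have hcard : ∀ a₀ : α,
        (Finset.univ.filter
          (fun f : α → W => f a₀ = w₀ ∧ ∀ b, f b = w₀ → b = a₀)).card
        = (Fintype.card W - 1) ^ (Fintype.card α - 1) := by
      intro a₀
      rw [← Fintype.card_subtype]
      rw [Fintype.card_congr (uniqueZeroEquiv a₀ w₀)]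
      rw [Fintype.card_fun, card_ne]
      congr 1
      have h := Fintype.card_subtype_compl (fun a : α => a = a₀)
      simpa [Fintype.card_subtype_eq] using h
    rw [Finset.sum_congr rfl fun a₀ _ => hcard a₀, Finset.sum_const, Finset.card_univ,
      smul_eq_mul]
  · intro a₀ _ a₁ _ hne
    rw [Function.onFun, Finset.disjoint_left]
    rintro f hf0 hf1
    simp only [Finset.mem_filter, Finset.mem_univ, true_and] at hf0 hf1
    exact hne (hf1.2 a₀ hf0.1)

/-- Splitting off the values outside the range of an injection. -/
noncomputable def splitEquiv (e : α → β) (he : Function.Injective e) :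
    (β → W) ≃ (α → W) × ({b : β // b ∉ Set.range e} → W) where
  toFun h := (fun a => h (e a), fun b => h b.1)
  invFun q := fun b =>
    if hb : b ∈ Set.range e then q.1 (Classical.choose hb) else q.2 ⟨b, hb⟩
  left_inv h := by
    funext b
    show (if hb : b ∈ Set.range e then h (e (Classical.choose hb)) else h b) = h b
    by_cases hb : b ∈ Set.range e
    · rw [dif_pos hb]
      exact congrArg h (Classical.choose_spec hb)
    · rw [dif_neg hb]
  right_inv q := by
    refine Prod.ext ?_ ?_
    · funext a
      have hb : e a ∈ Set.range e := ⟨a, rfl⟩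
      show (if hb : e a ∈ Set.range e then q.1 (Classical.choose hb) else _) = q.1 a
      rw [dif_pos hb]
      exact congrArg q.1 (he (Classical.choose_spec hb))
    · funext x
      show (if hb : x.1 ∈ Set.range e then q.1 (Classical.choose hb) else q.2 ⟨x.1, hb⟩)
        = q.2 x
      rw [dif_neg x.2]

/-- Subtype of a product by a predicate on the first factor. -/
def prodSubEquiv {A B : Type*} (p : A → Prop) :
    {q : A × B // p q.1} ≃ {a : A // p a} × B where
  toFun q := (⟨q.1.1, q.2⟩, q.1.2)
  invFun x := ⟨(x.1.1, x.2), x.1.2⟩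
  left_inv q := rfl
  right_inv x := rfl

lemma count_exactlyOne (e : α → β) (he : Function.Injective e) (w₀ : W) :
    (Finset.univ.filter (fun h : β → W => ∃! a, h (e a) = w₀)).card
      = Fintype.card α * (Fintype.card W - 1) ^ (Fintype.card α - 1)
          * Fintype.card W ^ (Fintype.card β - Fintype.card α) := by
  rw [← Fintype.card_subtype]
  have e1 : {h : β → W // ∃! a, h (e a) = w₀}
      ≃ {q : (α → W) × ({b : β // b ∉ Set.range e} → W) // ∃! a, q.1 a = w₀} :=
    (splitEquiv e he).subtypeEquiv (fun h => Iff.rfl)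
  have e2 := prodSubEquiv (B := ({b : β // b ∉ Set.range e} → W))
    (fun f : α → W => ∃! a, f a = w₀)
  rw [Fintype.card_congr (e1.trans e2), Fintype.card_prod, Fintype.card_subtype,
    card_filter_existsUnique, Fintype.card_fun]
  congr 2
  have h := Fintype.card_subtype_compl (fun b : β => b ∈ Set.range e)
  rw [h]
  congr 1
  exact Fintype.card_congr (Equiv.ofInjective e he).symm

end Counting

section LowerBound

variable {d n : ℕ}

/-- Functions vanishing on `F` correspond to functions on the complement. -/
def normEquiv (F : Finset (Fin n)) :
    {g : Fin n → Bool // ∀ i ∈ F, g i = false} ≃ ({i : Fin n // i ∉ F} → Bool) where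
  toFun g x := g.1 x.1
  invFun k := ⟨fun i => if h : i ∈ F then false else k ⟨i, h⟩, fun i hi => dif_pos hi⟩
  left_inv g := by
    apply Subtype.ext
    funext i
    show (if h : i ∈ F then false else g.1 i) = g.1 i
    by_cases h : i ∈ F
    · rw [dif_pos h]
      exact (g.2 i h).symm
    · rw [dif_neg h]
  right_inv k := by
    funext x
    show (if h : x.1 ∈ F then false else k ⟨x.1, h⟩) = k x
    rw [dif_neg x.2]

lemma card_valid :
    (Finset.univ.filter (fun p : Finset (Fin n) × (Fin n → Bool) =>
        p.1.card = d ∧ ∀ i ∈ p.1, p.2 i = false)).card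
      = n.choose d * 2 ^ (n - d) := by
  rw [Finset.card_filter, Fintype.sum_prod_type]
  have hinner : ∀ F : Finset (Fin n),
      (∑ g : Fin n → Bool, if F.card = d ∧ ∀ i ∈ F, g i = false then 1 else 0)
        = if F.card = d then 2 ^ (n - d) else 0 := by
    intro F
    by_cases hF : F.card = d
    · rw [if_pos hF]
      have : ∀ g : Fin n → Bool,
          (if F.card = d ∧ ∀ i ∈ F, g i = false then 1 else 0)
            = if ∀ i ∈ F, g i = false then 1 else 0 := by
        intro g
        by_cases hg : ∀ i ∈ F, g i = false <;> simp [hg, hF]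
      rw [Finset.sum_congr rfl fun g _ => this g, ← Finset.card_filter,
        ← Fintype.card_subtype, Fintype.card_congr (normEquiv F), Fintype.card_fun]
      have h := Fintype.card_subtype_compl (fun i : Fin n => i ∈ F)
      rw [h]
      have h2 : Fintype.card {i : Fin n // i ∈ F} = F.card := Fintype.card_coe F
      rw [h2, hF, Fintype.card_fin, Fintype.card_bool]
    · rw [if_neg hF]
      have : ∀ g : Fin n → Bool,
          (if F.card = d ∧ ∀ i ∈ F, g i = false then 1 else 0) = 0 := by
        intro g
        simp [hF]
      rw [Finset.sum_congr rfl fun g _ => this g, Finset.sum_const, smul_zero]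
  rw [Finset.sum_congr rfl fun F _ => hinner F]
  have : ∀ F : Finset (Fin n), (if F.card = d then 2 ^ (n - d) else 0)
      = 2 ^ (n - d) * (if F.card = d then 1 else 0) := by
    intro F; split <;> simp
  rw [Finset.sum_congr rfl fun F _ => this F, ← Finset.mul_sum, ← Finset.card_filter,
    ← Fintype.card_subtype, Fintype.card_finset_len, Fintype.card_fin, Nat.mul_comm]

end LowerBound


section Main

variable {d n : ℕ}

set_option maxHeartbeats 2000000 in
lemma exD_ge (hd : 1 ≤ d) (hdn : d ≤ n) :
    (((2 : ℝ) ^ d - 1) / 2 ^ d) ^ (2 ^ d - 1)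
      ≤ exD d ({fun _ => false} : Set (Fin d → Bool)) n := by
  set U : Set (Fin d → Bool) := {fun _ => false} with hU
  set w₀ : Fin d → Bool := fun _ => false with hw₀
  set Sh : ((Fin n → Bool) → (Fin d → Bool)) → Set (Fin n → Bool) :=
    fun h => {v | h v = w₀} with hSh
  set CNT : ℕ := 2 ^ d * (2 ^ d - 1) ^ (2 ^ d - 1) * (2 ^ d) ^ (2 ^ n - 2 ^ d) with hCNT
  have cardW : Fintype.card (Fin d → Bool) = 2 ^ d := by
    simp [Fintype.card_fun]
  have cardV : Fintype.card (Fin n → Bool) = 2 ^ n := by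
    simp [Fintype.card_fun]
  have hstep : ∀ p : Finset (Fin n) × (Fin n → Bool),
      (∑ h : (Fin n → Bool) → (Fin d → Bool), if goodPred d U (Sh h) p then 1 else 0)
        = if p.1.card = d ∧ ∀ i ∈ p.1, p.2 i = false then CNT else 0 := by
    intro p
    by_cases hv : p.1.card = d ∧ ∀ i ∈ p.1, p.2 i = false
    · rw [if_pos hv]
      obtain ⟨hF, hnorm⟩ := hv
      have hiff : ∀ h : (Fin n → Bool) → (Fin d → Bool),
          goodPred d U (Sh h) p ↔ ∃! u, h (embed p.1 hF p.2 u) = w₀ := by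
        intro h
        constructor
        · rintro ⟨hF', -, hgood⟩
          rw [isGood_single_iff] at hgood
          exact hgood
        · intro hu
          exact ⟨hF, hnorm, (isGood_single_iff (Sh h) p.1 hF p.2).2 hu⟩
      have hcount := count_exactlyOne (embed p.1 hF p.2) (embed_injective p.1 hF p.2) w₀
      rw [cardW, cardV] at hcount
      calc (∑ h : (Fin n → Bool) → (Fin d → Bool), if goodPred d U (Sh h) p then 1 else 0)
          = ∑ h : (Fin n → Bool) → (Fin d → Bool),
              if ∃! u, h (embed p.1 hF p.2 u) = w₀ then 1 else 0 :=
            Finset.sum_congr rfl fun h _ => if_congr (hiff h) rfl rfl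
        _ = (Finset.univ.filter (fun h : (Fin n → Bool) → (Fin d → Bool) =>
              ∃! u, h (embed p.1 hF p.2 u) = w₀)).card := (Finset.card_filter _ _).symm
        _ = CNT := by
            rw [hCNT]
            convert hcount using 2
            ext h
            simp only [Finset.mem_filter, Finset.mem_univ, true_and]
    · rw [if_neg hv]
      have hz : ∀ h : (Fin n → Bool) → (Fin d → Bool),
          (if goodPred d U (Sh h) p then 1 else 0) = 0 := by
        intro h
        rw [if_neg]
        rintro ⟨hF, hnorm, -⟩
        exact hv ⟨hF, hnorm⟩
      rw [Finset.sum_congr rfl fun h _ => hz h, Finset.sum_const, smul_zero]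
  have hsum : (∑ h : (Fin n → Bool) → (Fin d → Bool), goodCount d U n (Sh h))
      = (n.choose d * 2 ^ (n - d)) * CNT := by
    have h1 : ∀ h : (Fin n → Bool) → (Fin d → Bool), goodCount d U n (Sh h)
        = ∑ p : Finset (Fin n) × (Fin n → Bool),
            if goodPred d U (Sh h) p then 1 else 0 := by
      intro h
      rw [goodCount_eq_card_filter, Finset.card_filter]
    rw [Finset.sum_congr rfl fun h _ => h1 h, Finset.sum_comm,
      Finset.sum_congr rfl fun p _ => hstep p]
    have h2 : ∀ p : Finset (Fin n) × (Fin n → Bool),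
        (if p.1.card = d ∧ ∀ i ∈ p.1, p.2 i = false then CNT else 0)
          = CNT * (if p.1.card = d ∧ ∀ i ∈ p.1, p.2 i = false then 1 else 0) := by
      intro p; split <;> simp
    rw [Finset.sum_congr rfl fun p _ => h2 p, ← Finset.mul_sum, ← Finset.card_filter,
      card_valid, Nat.mul_comm]
  obtain ⟨h₀, -, hh⟩ := Finset.exists_le_of_sum_le (s := Finset.univ)
    (f := fun _ : (Fin n → Bool) → (Fin d → Bool) => (n.choose d * 2 ^ (n - d)) * CNT)
    (g := fun h => Fintype.card ((Fin n → Bool) → (Fin d → Bool)) * goodCount d U n (Sh h))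
    Finset.univ_nonempty
    (le_of_eq (by rw [Finset.sum_const, Finset.card_univ, ← Finset.mul_sum, hsum,
      smul_eq_mul]))
  have hcardH : Fintype.card ((Fin n → Bool) → (Fin d → Bool)) = (2 ^ d) ^ (2 ^ n) := by
    rw [Fintype.card_fun, cardW, cardV]
  rw [hcardH] at hh
  -- now real arithmetic
  refine le_trans ?_ (gFrac_le_exD U (Sh h₀))
  have hdenpos : (0 : ℝ) < (n.choose d : ℝ) * 2 ^ (n - d) := by
    have := Nat.choose_pos hdn
    positivity
  rw [gFrac, le_div_iff₀ hdenpos]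
  have h1 : (1 : ℕ) ≤ 2 ^ d := Nat.one_le_two_pow
  have hexp : (2 : ℕ) ^ d ≤ 2 ^ n := Nat.pow_le_pow_right (by norm_num) hdn
  have h3 : (2 ^ d - 1) + (1 + (2 ^ n - 2 ^ d)) = 2 ^ n := by omega
  have hY : (0 : ℝ) < ((2 : ℝ) ^ d) ^ (2 ^ n) := by positivity
  have hsplit : ((2 : ℝ) ^ d) ^ (2 ^ n)
      = ((2 : ℝ) ^ d) ^ (2 ^ d - 1) * ((2 : ℝ) ^ d * ((2 : ℝ) ^ d) ^ (2 ^ n - 2 ^ d)) := by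
    calc ((2 : ℝ) ^ d) ^ (2 ^ n)
        = ((2 : ℝ) ^ d) ^ ((2 ^ d - 1) + (1 + (2 ^ n - 2 ^ d))) := by rw [h3]
      _ = ((2 : ℝ) ^ d) ^ (2 ^ d - 1) * ((2 : ℝ) ^ d * ((2 : ℝ) ^ d) ^ (2 ^ n - 2 ^ d)) := by
          rw [pow_add, pow_add, pow_one]
  have hc : ((2 ^ d - 1 : ℕ) : ℝ) = (2 : ℝ) ^ d - 1 := by
    rw [Nat.cast_sub h1]
    push_cast
    ring
  have hcnt : ((CNT : ℕ) : ℝ)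
      = (((2 : ℝ) ^ d - 1) / 2 ^ d) ^ (2 ^ d - 1) * ((2 : ℝ) ^ d) ^ (2 ^ n) := by
    rw [hCNT]
    push_cast [hc]
    rw [div_pow, hsplit]
    have hy : ((2 : ℝ) ^ d) ^ (2 ^ d - 1) ≠ 0 := by positivity
    field_simp
  have hhR : ((n.choose d : ℝ) * 2 ^ (n - d)) * ((CNT : ℕ) : ℝ)
      ≤ ((2 : ℝ) ^ d) ^ (2 ^ n) * (goodCount d U n (Sh h₀) : ℝ) := by
    exact_mod_cast hh
  apply le_of_mul_le_mul_left _ hY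
  calc ((2 : ℝ) ^ d) ^ (2 ^ n)
        * ((((2 : ℝ) ^ d - 1) / 2 ^ d) ^ (2 ^ d - 1) * ((n.choose d : ℝ) * 2 ^ (n - d)))
      = ((n.choose d : ℝ) * 2 ^ (n - d)) * ((CNT : ℕ) : ℝ) := by
        rw [hcnt]
        ring
    _ ≤ ((2 : ℝ) ^ d) ^ (2 ^ n) * (goodCount d U n (Sh h₀) : ℝ) := hhR

end Main

end CubeDensityAux


/-- λ(U_d, d) ≥ ((2^d − 1)/2^d)^(2^d − 1), where U_d is a single vertex of Q_d. -/
theorem dCubeDensity_single_vertex_ge_random (d : ℕ) (hd : 1 ≤ d) :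
    ∃ L : ℝ,
      Filter.Tendsto
        (fun n => CubeDensity.exD d ({fun _ => false} : Set (Fin d → Bool)) n)
        Filter.atTop (nhds L) ∧
      (((2 : ℝ) ^ d - 1) / 2 ^ d) ^ (2 ^ d - 1) ≤ L := by
  classical
  set U : Set (Fin d → Bool) := {fun _ => false} with hU
  refine ⟨⨅ k : ℕ, CubeDensity.exD d U (k + d), ?_, ?_⟩
  · have hmono : Antitone (fun k : ℕ => CubeDensity.exD d U (k + d)) := by
      apply antitone_nat_of_succ_le
      intro k
      have hkd : (k + 1) + d = (k + d) + 1 := by omega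
      rw [hkd]
      exact CubeDensityAux.exD_succ_le (Nat.le_add_left d k) U
    have hbdd : BddBelow (Set.range fun k : ℕ => CubeDensity.exD d U (k + d)) := by
      refine ⟨0, ?_⟩
      rintro x ⟨k, rfl⟩
      exact CubeDensityAux.exD_nonneg U
    have htend := tendsto_atTop_ciInf hmono hbdd
    exact (Filter.tendsto_add_atTop_iff_nat d).mp htend
  · exact le_ciInf fun k => CubeDensityAux.exD_ge hd (Nat.le_add_left d k)
end

section
/- Let d ≥ 1 and let U_d ⊆ {0,1}^d be the configuration consisting of the single vertex (0,...,0) of Q_d. Then λ(U_d,d) ≥ 2/(d+1). -/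
open Filter

namespace CubeDensity

-- ===== auxiliary lemmas =====
open Finset
variable {n : ℕ}

open scoped Classical in
lemma goodCount_eq_card (d : ℕ) (H : Set (Fin d → Bool)) (n : ℕ)
    (S : Set (Fin n → Bool)) :
    goodCount d H n S = (Finset.univ.filter
      (fun p : Finset (Fin n) × (Fin n → Bool) =>
        ∃ hF : p.1.card = d, (∀ i ∈ p.1, p.2 i = false) ∧ IsGood H S p.1 hF p.2)).card := by
  rw [goodCount, Nat.card_eq_fintype_card, Fintype.card_subtype]

open scoped Classical in
lemma card_fixed (F : Finset (Fin n)) :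
    (Finset.univ.filter fun g : Fin n → Bool => ∀ i ∈ F, g i = false).card
      = 2 ^ (n - F.card) := by
  have e : {g : Fin n → Bool // ∀ i ∈ F, g i = false} ≃ (↥(Fᶜ : Finset (Fin n)) → Bool) :=
    { toFun := fun g i => g.1 i.1
      invFun := fun h => ⟨fun i => if hi : i ∈ F then false else h ⟨i, by simpa using hi⟩,
        fun i hi => by simp [hi]⟩
      left_inv := by
        rintro ⟨g, hg⟩
        ext i
        by_cases hi : i ∈ F <;> simp [hi, hg i]
      right_inv := by
        intro h
        ext ⟨i, hi⟩
        have : i ∉ F := by simpa using hi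
        simp [this] }
  have := Fintype.card_congr e
  rw [Fintype.card_subtype] at this
  rw [this]
  simp [Finset.card_compl]

open scoped Classical in
lemma total_card' (d : ℕ) :
    (Finset.univ.filter (fun p : Finset (Fin n) × (Fin n → Bool) =>
      p.1.card = d ∧ ∀ i ∈ p.1, p.2 i = false)).card = n.choose d * 2 ^ (n - d) := by
  rw [Finset.card_eq_sum_card_fiberwise
    (f := fun p : Finset (Fin n) × (Fin n → Bool) => p.1)
    (t := Finset.univ.filter fun F : Finset (Fin n) => F.card = d)
    (fun p hp => by simp_all)]
  have hfib : ∀ F ∈ (Finset.univ.filter fun F : Finset (Fin n) => F.card = d),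
      ((Finset.univ.filter (fun p : Finset (Fin n) × (Fin n → Bool) =>
        p.1.card = d ∧ ∀ i ∈ p.1, p.2 i = false)).filter fun p => p.1 = F).card
      = 2 ^ (n - d) := by
    intro F hF
    simp only [Finset.mem_filter, Finset.mem_univ, true_and] at hF
    rw [← hF, ← card_fixed F]
    apply Finset.card_nbij' (i := fun p => p.2) (j := fun g => (F, g))
    · intro p hp
      simp only [Finset.mem_coe, Finset.mem_filter, Finset.mem_univ, true_and] at hp ⊢
      rcases hp with ⟨⟨h1, h2⟩, h3⟩
      intro i hi; exact h2 i (h3 ▸ hi)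
    · intro g hg
      refine Finset.mem_filter.2 ⟨Finset.mem_filter.2 ⟨Finset.mem_univ _, rfl, ?_⟩, rfl⟩
      simpa using hg
    · intro p hp
      simp only [Finset.mem_coe, Finset.mem_filter] at hp
      rw [← hp.2]
    · intro g hg; rfl
  rw [Finset.sum_congr rfl hfib, Finset.sum_const, smul_eq_mul]
  congr 1
  simpa using Fintype.card_finset_len (α := Fin n) d

/-- weight of a 0/1 vector -/
def wt {m : ℕ} (x : Fin m → Bool) : ℕ := (Finset.univ.filter fun i => x i = true).card

lemma wt_false {m : ℕ} : wt (fun _ : Fin m => false) = 0 := by simp [wt]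

lemma wt_true {m : ℕ} : wt (fun _ : Fin m => true) = m := by simp [wt]

lemma wt_eq_zero {m : ℕ} {x : Fin m → Bool} (h : wt x = 0) : x = fun _ => false := by
  funext i
  by_contra hne
  have : x i = true := by revert hne; cases x i <;> simp
  have : i ∈ (Finset.univ.filter fun i => x i = true) := by simp [this]
  rw [Finset.card_eq_zero.1 h] at this
  simp at this

lemma wt_eq_top {m : ℕ} {x : Fin m → Bool} (h : wt x = m) : x = fun _ => true := by
  have : (Finset.univ.filter fun i => x i = true) = Finset.univ :=
    Finset.eq_univ_of_card _ (by simpa [wt] using h)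
  funext i
  have := Finset.eq_univ_iff_forall.1 this i
  simpa using this

lemma wt_le {m : ℕ} (x : Fin m → Bool) : wt x ≤ m := by
  simpa [wt] using Finset.card_le_card (Finset.filter_subset _ (Finset.univ : Finset (Fin m)))
open scoped Classical in
lemma wt_embed {n d : ℕ} (F : Finset (Fin n)) (hF : F.card = d) (g : Fin n → Bool)
    (hg : ∀ i ∈ F, g i = false) (u : Fin d → Bool) :
    wt (embed F hF g u) = wt g + wt u := by
  classical
  have hsplit : (Finset.univ.filter fun i => embed F hF g u i = true)
      = (F.filter fun i => embed F hF g u i = true)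
        ∪ (Fᶜ.filter fun i => embed F hF g u i = true) := by
    rw [← Finset.filter_union, Finset.union_compl]
  have hdisj : Disjoint (F.filter fun i => embed F hF g u i = true)
      (Fᶜ.filter fun i => embed F hF g u i = true) :=
    Finset.disjoint_filter_filter disjoint_compl_right
  have h1 : (Fᶜ.filter fun i => embed F hF g u i = true)
      = Finset.univ.filter fun i => g i = true := by
    ext i
    simp only [Finset.mem_filter, Finset.mem_compl, Finset.mem_univ, true_and]
    constructor
    · rintro ⟨hi, he⟩
      rwa [embed, dif_neg hi] at he
    · intro hgi
      have hi : i ∉ F := fun hiF => by simp [hg i hiF] at hgi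
      exact ⟨hi, by rwa [embed, dif_neg hi]⟩
  have key : ∀ k, ((F.orderIsoOfFin hF).symm ⟨((F.orderIsoOfFin hF) k : Fin n),
      ((F.orderIsoOfFin hF) k).2⟩) = k := by
    intro k
    have : (⟨((F.orderIsoOfFin hF) k : Fin n), ((F.orderIsoOfFin hF) k).2⟩ : {x // x ∈ F})
        = (F.orderIsoOfFin hF) k := rfl
    rw [this, OrderIso.symm_apply_apply]
  have h2 : (F.filter fun i => embed F hF g u i = true).card
      = (Finset.univ.filter fun k => u k = true).card := by
    symm
    apply Finset.card_bij (i := fun k _ => ((F.orderIsoOfFin hF) k : Fin n))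
    · intro k hk
      simp only [Finset.mem_filter, Finset.mem_univ, true_and] at hk
      have hmem : ((F.orderIsoOfFin hF) k : Fin n) ∈ F := ((F.orderIsoOfFin hF) k).2
      refine Finset.mem_filter.2 ⟨hmem, ?_⟩
      rw [embed, dif_pos hmem]
      rw [key k]
      exact hk
    · intro a _ b _ hab
      have := Subtype.ext hab (p := fun x => x ∈ F)
      simpa using (F.orderIsoOfFin hF).injective this
    · intro i hi
      simp only [Finset.mem_filter] at hi
      rcases hi with ⟨hiF, he⟩
      rw [embed, dif_pos hiF] at he
      refine ⟨(F.orderIsoOfFin hF).symm ⟨i, hiF⟩, Finset.mem_filter.2 ⟨Finset.mem_univ _, he⟩, ?_⟩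
      have : (F.orderIsoOfFin hF) ((F.orderIsoOfFin hF).symm ⟨i, hiF⟩) = ⟨i, hiF⟩ :=
        OrderIso.apply_symm_apply _ _
      rw [this]
  rw [wt, hsplit, Finset.card_union_of_disjoint hdisj, h1, h2, wt, wt, Nat.add_comm]


lemma exactCopy_singleton {d : ℕ} {K : Set (Fin d → Bool)}
    (h : ∃ k, K = {k}) : ExactCopy d ({fun _ => false} : Set (Fin d → Bool)) K := by
  obtain ⟨k, rfl⟩ := h
  refine ⟨1, k, ?_⟩
  rw [Set.image_singleton]
  congr 1
  funext i
  simp [autMap]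

/-- the layered set -/
def layer (n q c : ℕ) : Set (Fin n → Bool) := {x | wt x % q = c}

lemma isGood_layer_bot {d : ℕ} (F : Finset (Fin n)) (hF : F.card = d) (g : Fin n → Bool)
    (hg : ∀ i ∈ F, g i = false) (c : ℕ) (hd : 1 ≤ d)
    (hc : wt g % (d+1) = c) :
    IsGood ({fun _ => false} : Set (Fin d → Bool)) (layer n (d+1) c) F hF g := by
  apply exactCopy_singleton
  refine ⟨fun _ => false, ?_⟩
  ext u
  simp only [Set.mem_setOf_eq, Set.mem_singleton_iff, layer, wt_embed F hF g hg]
  constructor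
  · intro h
    have h2 : wt g + wt u ≡ wt g [MOD d+1] := h.trans hc.symm
    have h2' : wt g + wt u ≡ wt g + 0 [MOD d+1] := by simpa using h2
    have h3 : wt u % (d+1) = 0 % (d+1) := (Nat.ModEq.add_left_cancel' _ h2')
    have h4 : wt u < d + 1 := Nat.lt_succ_of_le (wt_le u)
    have : wt u = 0 := by rwa [Nat.mod_eq_of_lt h4, Nat.zero_mod] at h3
    exact wt_eq_zero this
  · rintro rfl
    rw [wt_false, Nat.add_zero, hc]

lemma isGood_layer_top {d : ℕ} (F : Finset (Fin n)) (hF : F.card = d) (g : Fin n → Bool)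
    (hg : ∀ i ∈ F, g i = false) (c : ℕ) (hd : 1 ≤ d)
    (hc : (wt g + d) % (d+1) = c) :
    IsGood ({fun _ => false} : Set (Fin d → Bool)) (layer n (d+1) c) F hF g := by
  apply exactCopy_singleton
  refine ⟨fun _ => true, ?_⟩
  ext u
  simp only [Set.mem_setOf_eq, Set.mem_singleton_iff, layer, wt_embed F hF g hg]
  constructor
  · intro h
    have h2 : wt g + wt u ≡ wt g + d [MOD d+1] := h.trans hc.symm
    have h3 : wt u % (d+1) = d % (d+1) := (Nat.ModEq.add_left_cancel' _ h2)
    have h4 : wt u < d + 1 := Nat.lt_succ_of_le (wt_le u)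
    have : wt u = d := by
      rwa [Nat.mod_eq_of_lt h4, Nat.mod_eq_of_lt (Nat.lt_succ_self d)] at h3
    exact wt_eq_top this
  · rintro rfl
    rw [wt_true, hc]

open scoped Classical in
lemma lower_bound {d : ℕ} (hd : 1 ≤ d) (hn : d ≤ n) :
    2 / ((d : ℝ) + 1) ≤ exD d ({fun _ => false} : Set (Fin d → Bool)) n := by
  set q := d + 1 with hq
  set base : Finset (Finset (Fin n) × (Fin n → Bool)) :=
    Finset.univ.filter (fun p => p.1.card = d ∧ ∀ i ∈ p.1, p.2 i = false) with hbase
  set N : ℕ → ℕ := fun c => (base.filter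
    (fun p => wt p.2 % q = c ∨ (wt p.2 + d) % q = c)).card with hN
  -- each pair is counted for exactly two values of c
  have hab : ∀ p : Finset (Fin n) × (Fin n → Bool),
      wt p.2 % q ≠ (wt p.2 + d) % q := by
    intro p heq
    have h2 : wt p.2 + 0 ≡ wt p.2 + d [MOD q] := by rw [Nat.add_zero]; exact heq
    have h3 : (0 : ℕ) % q = d % q := Nat.ModEq.add_left_cancel' _ h2
    rw [Nat.zero_mod, Nat.mod_eq_of_lt (Nat.lt_succ_self d)] at h3
    omega
  have hqpos : 0 < q := Nat.succ_pos d
  have hsum : ∑ c ∈ Finset.range q, N c = 2 * base.card := by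
    have h1 : ∀ c, N c = ∑ p ∈ base,
        if wt p.2 % q = c ∨ (wt p.2 + d) % q = c then 1 else 0 := by
      intro c; simp only [hN]; rw [Finset.card_filter]
    rw [Finset.sum_congr rfl (fun c _ => h1 c), Finset.sum_comm]
    have h2 : ∀ p ∈ base, (∑ c ∈ Finset.range q,
        if wt p.2 % q = c ∨ (wt p.2 + d) % q = c then 1 else 0) = 2 := by
      intro p _
      rw [← Finset.card_filter]
      have hfe : (Finset.range q).filter
          (fun c => wt p.2 % q = c ∨ (wt p.2 + d) % q = c)
          = {wt p.2 % q, (wt p.2 + d) % q} := by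
        ext c
        simp only [Finset.mem_filter, Finset.mem_range, Finset.mem_insert,
          Finset.mem_singleton]
        constructor
        · rintro ⟨_, h | h⟩
          · exact Or.inl h.symm
          · exact Or.inr h.symm
        · rintro (rfl | rfl)
          · exact ⟨Nat.mod_lt _ hqpos, Or.inl rfl⟩
          · exact ⟨Nat.mod_lt _ hqpos, Or.inr rfl⟩
      rw [hfe, Finset.card_insert_of_notMem (fun hmem => hab p (Finset.mem_singleton.1 hmem)), Finset.card_singleton]
    rw [Finset.sum_congr rfl h2, Finset.sum_const, smul_eq_mul, mul_comm]
  -- pigeonhole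
  have hpig : ∃ c ∈ Finset.range q, 2 * base.card ≤ q * N c := by
    apply Finset.exists_le_of_sum_le ⟨0, Finset.mem_range.2 hqpos⟩
    apply le_of_eq
    calc ∑ _c ∈ Finset.range q, 2 * base.card = q * (2 * base.card) := by
          rw [Finset.sum_const, Finset.card_range, smul_eq_mul]
      _ = ∑ c ∈ Finset.range q, q * N c := by rw [← Finset.mul_sum, hsum]
  obtain ⟨c, _, hc⟩ := hpig
  -- the layered set with this residue is good on all counted cubes
  have hNle : N c ≤ goodCount d ({fun _ => false} : Set (Fin d → Bool)) n (layer n q c) := by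
    rw [goodCount_eq_card]
    apply Finset.card_le_card
    intro p hp
    simp only [hN, hbase, Finset.mem_filter, Finset.mem_univ, true_and] at hp ⊢
    obtain ⟨⟨hF, hg⟩, hcond⟩ := hp
    refine ⟨hF, hg, ?_⟩
    rcases hcond with h | h
    · exact isGood_layer_bot p.1 hF p.2 hg c hd h
    · exact isGood_layer_top p.1 hF p.2 hg c hd h
  -- put it together in ℝ
  have hbc : base.card = n.choose d * 2 ^ (n - d) := total_card' d
  have hTpos : (0 : ℝ) < (n.choose d : ℝ) * 2 ^ (n - d) := by
    have : 0 < n.choose d := Nat.choose_pos hn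
    positivity
  have hfrac : 2 / ((d : ℝ) + 1) ≤ gFrac d ({fun _ => false} : Set (Fin d → Bool)) n
      (layer n q c) := by
    rw [gFrac, div_le_div_iff₀ (by positivity) hTpos]
    have hcast : (2 : ℝ) * (n.choose d * 2 ^ (n - d)) ≤ (N c : ℝ) * ((d : ℝ) + 1) := by
      have := hc
      rw [hbc] at this
      calc (2 : ℝ) * (n.choose d * 2 ^ (n - d))
          = ((2 * (n.choose d * 2 ^ (n - d)) : ℕ) : ℝ) := by push_cast; ring
        _ ≤ ((q * N c : ℕ) : ℝ) := by exact_mod_cast this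
        _ = (N c : ℝ) * ((d : ℝ) + 1) := by rw [hq]; push_cast; ring
    calc (2 : ℝ) * (n.choose d * 2 ^ (n - d)) ≤ (N c : ℝ) * ((d : ℝ) + 1) := hcast
      _ ≤ (goodCount d ({fun _ => false} : Set (Fin d → Bool)) n (layer n q c) : ℝ)
          * ((d : ℝ) + 1) := by
          have : (N c : ℝ) ≤ _ := Nat.cast_le.2 hNle
          exact mul_le_mul_of_nonneg_right this (by positivity)
  refine hfrac.trans ?_
  exact le_ciSup (Set.Finite.bddAbove (Set.finite_range _)) (layer n q c)

-- ===== antitonicity =====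
section Antitone
variable {d : ℕ}

lemma map_card_eq (F' : Finset (Fin n)) (hF' : F'.card = d) (i : Fin (n+1)) :
    (F'.map i.succAboveOrderEmb.toEmbedding).card = d := by
  rw [Finset.card_map, hF']

lemma orderEmb_map_eq (F' : Finset (Fin n)) (hF' : F'.card = d) (i : Fin (n+1)) (k : Fin d) :
    ((F'.map i.succAboveOrderEmb.toEmbedding).orderEmbOfFin (map_card_eq F' hF' i)) k
      = i.succAbove ((F'.orderEmbOfFin hF') k) := by
  have := Finset.orderEmbOfFin_unique (map_card_eq F' hF' i)
    (f := fun k => i.succAbove ((F'.orderEmbOfFin hF') k))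
    (fun k => Finset.mem_map.2 ⟨_, Finset.orderEmbOfFin_mem _ _ _, rfl⟩)
    ((Fin.strictMono_succAbove i).comp (F'.orderEmbOfFin hF').strictMono)
  exact (congrFun this.symm k)

lemma embed_map (F' : Finset (Fin n)) (hF' : F'.card = d) (g' : Fin n → Bool)
    (i : Fin (n+1)) (b : Bool) (u : Fin d → Bool) :
    embed (F'.map i.succAboveOrderEmb.toEmbedding) (map_card_eq F' hF' i)
        (i.insertNth b g') u
      = i.insertNth b (embed F' hF' g' u) := by
  set F := F'.map i.succAboveOrderEmb.toEmbedding with hFdef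
  funext j
  by_cases hj : j = i
  · subst hj
    have hiF : j ∉ F := by
      simp only [hFdef, Finset.mem_map, Fin.succAboveOrderEmb_apply]
      rintro ⟨j', _, hj'⟩
      exact Fin.succAbove_ne j j' hj'
    rw [embed]
    rw [dif_neg hiF, Fin.insertNth_apply_same, Fin.insertNth_apply_same]
  · obtain ⟨j', rfl⟩ := Fin.exists_succAbove_eq hj
    rw [Fin.insertNth_apply_succAbove]
    by_cases hmem : j' ∈ F'
    · have hjF : i.succAbove j' ∈ F := Finset.mem_map.2 ⟨j', hmem, rfl⟩
      rw [embed, embed, dif_pos hjF, dif_pos hmem]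
      congr 1
      -- index identity
      set k := (F'.orderIsoOfFin hF').symm ⟨j', hmem⟩ with hk
      have h1 : (F'.orderEmbOfFin hF') k = j' := by
        rw [← Finset.coe_orderIsoOfFin_apply, hk, OrderIso.apply_symm_apply]
      have h2 : (F.orderEmbOfFin (map_card_eq F' hF' i)) k = i.succAbove j' := by
        rw [orderEmb_map_eq F' hF' i k, h1]
      have h3 : (F.orderIsoOfFin (map_card_eq F' hF' i)) k = ⟨i.succAbove j', hjF⟩ := by
        apply Subtype.ext
        rw [Finset.coe_orderIsoOfFin_apply]
        exact h2
      rw [← h3, OrderIso.symm_apply_apply]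
    · have hjF : i.succAbove j' ∉ F := by
        simp only [hFdef, Finset.mem_map, Fin.succAboveOrderEmb_apply]
        rintro ⟨j'', hj'', heq⟩
        exact hmem (Fin.succAbove_right_injective heq ▸ hj'')
      rw [embed, embed, dif_neg hjF, dif_neg hmem, Fin.insertNth_apply_succAbove]


/-- the slice of `S` at coordinate `i` with value `b` -/
def sliceSet {n : ℕ} (S : Set (Fin (n+1) → Bool)) (i : Fin (n+1)) (b : Bool) :
    Set (Fin n → Bool) := {x | i.insertNth b x ∈ S}

lemma good_pair_iff (H : Set (Fin d → Bool)) (S : Set (Fin (n+1) → Bool))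
    (i : Fin (n+1)) (b : Bool) (F' : Finset (Fin n)) (g' : Fin n → Bool) :
    (∃ hF : (F'.map i.succAboveOrderEmb.toEmbedding).card = d,
      (∀ j ∈ F'.map i.succAboveOrderEmb.toEmbedding,
        (i.insertNth b g' : Fin (n+1) → Bool) j = false) ∧
        IsGood H S (F'.map i.succAboveOrderEmb.toEmbedding) hF
          (i.insertNth b g' : Fin (n+1) → Bool))
    ↔ (∃ hF' : F'.card = d, (∀ j ∈ F', g' j = false) ∧
        IsGood H (sliceSet S i b) F' hF' g') := by
  have hcards : (F'.map i.succAboveOrderEmb.toEmbedding).card = F'.card :=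
    Finset.card_map _
  constructor
  · rintro ⟨hF, hnorm, hgood⟩
    have hF' : F'.card = d := by rw [← hcards]; exact hF
    refine ⟨hF', ?_, ?_⟩
    · intro j hj
      have := hnorm (i.succAbove j) (Finset.mem_map.2 ⟨j, hj, rfl⟩)
      rwa [Fin.insertNth_apply_succAbove] at this
    · have hset : {u : Fin d → Bool |
          embed (F'.map i.succAboveOrderEmb.toEmbedding) hF (i.insertNth b g') u ∈ S}
          = {u : Fin d → Bool | embed F' hF' g' u ∈ sliceSet S i b} := by
        ext u
        have he := embed_map F' hF' g' i b u
        have : embed (F'.map i.succAboveOrderEmb.toEmbedding) hF (i.insertNth b g') u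
            = i.insertNth b (embed F' hF' g' u) := he
        simp only [Set.mem_setOf_eq, this, sliceSet]
      rw [IsGood, ← hset]
      exact hgood
  · rintro ⟨hF', hnorm, hgood⟩
    have hF : (F'.map i.succAboveOrderEmb.toEmbedding).card = d := by
      rw [hcards]; exact hF'
    refine ⟨hF, ?_, ?_⟩
    · intro j hj
      obtain ⟨j', hj', rfl⟩ := Finset.mem_map.1 hj
      have hcoe : (i.succAboveOrderEmb.toEmbedding j' : Fin (n+1)) = i.succAbove j' := rfl
      rw [hcoe, Fin.insertNth_apply_succAbove]
      exact hnorm j' hj'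
    · have hset : {u : Fin d → Bool |
          embed (F'.map i.succAboveOrderEmb.toEmbedding) hF (i.insertNth b g') u ∈ S}
          = {u : Fin d → Bool | embed F' hF' g' u ∈ sliceSet S i b} := by
        ext u
        have he := embed_map F' hF' g' i b u
        have : embed (F'.map i.succAboveOrderEmb.toEmbedding) hF (i.insertNth b g') u
            = i.insertNth b (embed F' hF' g' u) := he
        simp only [Set.mem_setOf_eq, this, sliceSet]
      rw [IsGood, hset]
      exact hgood

open scoped Classical in
lemma slice_count (H : Set (Fin d → Bool)) (S : Set (Fin (n+1) → Bool))
    (i : Fin (n+1)) (b : Bool) :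
    ((Finset.univ.filter (fun p : Finset (Fin (n+1)) × (Fin (n+1) → Bool) =>
        ∃ hF : p.1.card = d, (∀ j ∈ p.1, p.2 j = false) ∧ IsGood H S p.1 hF p.2)).filter
      (fun p => i ∉ p.1 ∧ p.2 i = b)).card
    = goodCount d H n (sliceSet S i b) := by
  rw [goodCount_eq_card]
  symm
  apply Finset.card_bij (i := fun p _ =>
    ((p.1.map i.succAboveOrderEmb.toEmbedding : Finset (Fin (n+1))),
      (i.insertNth b p.2 : Fin (n+1) → Bool)))
  · -- maps into
    intro p hp
    simp only [Finset.mem_filter, Finset.mem_univ, true_and] at hp ⊢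
    refine ⟨(good_pair_iff H S i b p.1 p.2).2 hp, ?_, Fin.insertNth_apply_same _ _ _⟩
    simp only [Finset.mem_map, Fin.succAboveOrderEmb_apply]
    rintro ⟨j', _, hj'⟩
    exact Fin.succAbove_ne i j' hj'
  · -- injective
    intro p hp p' hp' heq
    have h1 : p.1.map i.succAboveOrderEmb.toEmbedding
        = p'.1.map i.succAboveOrderEmb.toEmbedding := congrArg Prod.fst heq
    have h2 : (i.insertNth b p.2 : Fin (n+1) → Bool) = i.insertNth b p'.2 :=
      congrArg Prod.snd heq
    have hfst : p.1 = p'.1 := Finset.map_injective _ h1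
    have hsnd : p.2 = p'.2 := by
      funext j
      have := congrFun h2 (i.succAbove j)
      rwa [Fin.insertNth_apply_succAbove, Fin.insertNth_apply_succAbove] at this
    exact Prod.ext hfst hsnd
  · -- surjective
    intro p hp
    simp only [Finset.mem_filter, Finset.mem_univ, true_and] at hp
    obtain ⟨hgood, hiF, hib⟩ := hp
    have hinj : Set.InjOn i.succAbove (i.succAbove ⁻¹' ↑p.1) :=
      Fin.succAbove_right_injective.injOn
    refine ⟨(p.1.preimage i.succAbove hinj, fun j => p.2 (i.succAbove j)), ?_, ?_⟩
    · -- in the goodCount filter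
      have hmapeq : (p.1.preimage i.succAbove hinj).map i.succAboveOrderEmb.toEmbedding
          = p.1 := by
        ext j
        simp only [Finset.mem_map, Fin.succAboveOrderEmb_apply, Finset.mem_preimage]
        constructor
        · rintro ⟨j', hj', rfl⟩; exact hj'
        · intro hj
          have hne : j ≠ i := fun h => hiF (h ▸ hj)
          obtain ⟨j', rfl⟩ := Fin.exists_succAbove_eq hne
          exact ⟨j', hj, rfl⟩
      have hinsert : (i.insertNth b (fun j => p.2 (i.succAbove j)) : Fin (n+1) → Bool)
          = p.2 := by
        funext j
        by_cases hj : j = i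
        · subst hj; rw [Fin.insertNth_apply_same, hib]
        · obtain ⟨j', rfl⟩ := Fin.exists_succAbove_eq hj
          rw [Fin.insertNth_apply_succAbove]
      refine Finset.mem_filter.2 ⟨Finset.mem_univ _, ?_⟩
      apply (good_pair_iff H S i b _ _).1
      rw [hmapeq, hinsert]
      exact hgood
    · -- maps back to p
      have hmapeq : (p.1.preimage i.succAbove hinj).map i.succAboveOrderEmb.toEmbedding
          = p.1 := by
        ext j
        simp only [Finset.mem_map, Fin.succAboveOrderEmb_apply, Finset.mem_preimage]
        constructor
        · rintro ⟨j', hj', rfl⟩; exact hj'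
        · intro hj
          have hne : j ≠ i := fun h => hiF (h ▸ hj)
          obtain ⟨j', rfl⟩ := Fin.exists_succAbove_eq hne
          exact ⟨j', hj, rfl⟩
      have hinsert : (i.insertNth b (fun j => p.2 (i.succAbove j)) : Fin (n+1) → Bool)
          = p.2 := by
        funext j
        by_cases hj : j = i
        · subst hj; rw [Fin.insertNth_apply_same, hib]
        · obtain ⟨j', rfl⟩ := Fin.exists_succAbove_eq hj
          rw [Fin.insertNth_apply_succAbove]
      exact Prod.ext hmapeq hinsert

open scoped Classical in
lemma double_count (H : Set (Fin d → Bool)) (S : Set (Fin (n+1) → Bool)) :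
    goodCount d H (n+1) S * ((n+1) - d)
      = ∑ i : Fin (n+1), ∑ b : Bool, goodCount d H n (sliceSet S i b) := by
  classical
  set P : Finset (Finset (Fin (n+1)) × (Fin (n+1) → Bool)) :=
    Finset.univ.filter (fun p => ∃ hF : p.1.card = d,
      (∀ j ∈ p.1, p.2 j = false) ∧ IsGood H S p.1 hF p.2) with hP
  have h1 : ∀ i b, goodCount d H n (sliceSet S i b)
      = (P.filter (fun p => i ∉ p.1 ∧ p.2 i = b)).card :=
    fun i b => (slice_count H S i b).symm
  calc goodCount d H (n+1) S * ((n+1) - d)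
      = ∑ p ∈ P, ((n+1) - d) := by
        rw [goodCount_eq_card, Finset.sum_const, smul_eq_mul]
    _ = ∑ p ∈ P, ∑ i : Fin (n+1), ∑ b : Bool,
          (if i ∉ p.1 ∧ p.2 i = b then 1 else 0) := by
        apply Finset.sum_congr rfl
        intro p hp
        have hcard : p.1.card = d := by
          rw [hP] at hp
          simp only [Finset.mem_filter, Finset.mem_univ, true_and] at hp
          obtain ⟨hF, -⟩ := hp
          exact hF
        have hinner : ∀ i : Fin (n+1), (∑ b : Bool,
            (if i ∉ p.1 ∧ p.2 i = b then 1 else 0)) = if i ∉ p.1 then 1 else 0 := by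
          intro i
          by_cases hi : i ∈ p.1
          · simp [hi]
          · cases h2 : p.2 i <;> simp [hi, h2]
        rw [Finset.sum_congr rfl (fun i _ => hinner i)]
        symm
        rw [← Finset.card_filter]
        have hfc : Finset.univ.filter (fun i : Fin (n+1) => i ∉ p.1) = p.1ᶜ := by
          ext j; simp
        rw [hfc, Finset.card_compl, hcard, Fintype.card_fin]
    _ = ∑ i : Fin (n+1), ∑ b : Bool, ∑ p ∈ P,
          (if i ∉ p.1 ∧ p.2 i = b then 1 else 0) := by
        rw [Finset.sum_comm]
        apply Finset.sum_congr rfl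
        intro i _
        rw [Finset.sum_comm]
    _ = ∑ i : Fin (n+1), ∑ b : Bool, goodCount d H n (sliceSet S i b) := by
        apply Finset.sum_congr rfl
        intro i _
        apply Finset.sum_congr rfl
        intro b _
        rw [h1 i b, Finset.card_filter]

lemma gFrac_nonneg (H : Set (Fin d → Bool)) (S : Set (Fin n → Bool)) :
    0 ≤ gFrac d H n S :=
  div_nonneg (Nat.cast_nonneg _) (by positivity)

lemma exD_nonneg (H : Set (Fin d → Bool)) : 0 ≤ exD d H n :=
  le_trans (gFrac_nonneg H (∅ : Set (Fin n → Bool)))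
    (le_ciSup (Set.Finite.bddAbove (Set.finite_range _)) _)

lemma antitone_step (H : Set (Fin d → Bool)) (hn : d ≤ n) :
    exD d H (n+1) ≤ exD d H n := by
  apply ciSup_le
  intro S
  set Tn : ℝ := (n.choose d : ℝ) * 2 ^ (n - d) with hTndef
  have hTn : 0 < Tn := by
    have : 0 < n.choose d := Nat.choose_pos hn
    positivity
  have hslice : ∀ (i : Fin (n+1)) (b : Bool),
      (goodCount d H n (sliceSet S i b) : ℝ) ≤ exD d H n * Tn := by
    intro i b
    have h := le_ciSup (Set.Finite.bddAbove (Set.finite_range (gFrac d H n)))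
      (sliceSet S i b)
    rw [gFrac, div_le_iff₀ hTn] at h
    exact h
  have hdc := double_count H S
  -- numeric identities
  have e1 : (n+1).choose d * ((n+1) - d) = (n+1) * n.choose d := by
    rw [← Nat.choose_succ_right_eq (n+1) d]
    exact (Nat.add_one_mul_choose_eq n d).symm
  have e2 : (2:ℝ) ^ ((n+1) - d) = 2 * 2 ^ (n - d) := by
    rw [show (n+1) - d = (n-d)+1 by omega, pow_succ]; ring
  have hDpos : (0:ℝ) < ((n+1).choose d : ℝ) * 2 ^ ((n+1) - d) := by
    have : 0 < (n+1).choose d := Nat.choose_pos (by omega)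
    positivity
  rw [gFrac, div_le_iff₀ hDpos]
  have hnd : (0:ℝ) < ((n+1) - d : ℕ) := by
    have : 0 < (n+1) - d := by omega
    exact_mod_cast this
  rw [← mul_le_mul_iff_of_pos_right hnd]
  calc (goodCount d H (n+1) S : ℝ) * (((n+1) - d : ℕ) : ℝ)
      = ((goodCount d H (n+1) S * ((n+1) - d) : ℕ) : ℝ) := by push_cast; ring
    _ = ((∑ i : Fin (n+1), ∑ b : Bool, goodCount d H n (sliceSet S i b) : ℕ) : ℝ) := by
        rw [hdc]
    _ = ∑ i : Fin (n+1), ∑ b : Bool, (goodCount d H n (sliceSet S i b) : ℝ) := by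
        push_cast; rfl
    _ ≤ ∑ _i : Fin (n+1), ∑ _b : Bool, exD d H n * Tn := by
        apply Finset.sum_le_sum
        intro i _
        apply Finset.sum_le_sum
        intro b _
        exact hslice i b
    _ = (n+1) * 2 * (exD d H n * Tn) := by
        simp [Finset.sum_const, Finset.card_univ]
        ring
    _ = exD d H n * (((n+1).choose d : ℝ) * 2 ^ ((n+1) - d)) * (((n+1) - d : ℕ) : ℝ) := by
        rw [e2, hTndef]
        have e1' : (((n+1).choose d : ℝ)) * ((((n+1) - d : ℕ)) : ℝ)
            = ((n+1 : ℕ) : ℝ) * (n.choose d : ℝ) := by exact_mod_cast congrArg (Nat.cast : ℕ → ℝ) e1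
        push_cast at e1' ⊢
        linear_combination (-(2 * exD d H n * (2:ℝ)^(n-d))) * e1'


end Antitone

end CubeDensity

/-- λ(U_d, d) ≥ 2/(d+1), where U_d is a single vertex of Q_d. -/
theorem dCubeDensity_single_vertex_ge_layered (d : ℕ) (hd : 1 ≤ d) :
    ∃ L : ℝ,
      Filter.Tendsto
        (fun n => CubeDensity.exD d ({fun _ => false} : Set (Fin d → Bool)) n)
        Filter.atTop (nhds L) ∧
      2 / ((d : ℝ) + 1) ≤ L := by
  classical
  set f := fun n => CubeDensity.exD d ({fun _ => false} : Set (Fin d → Bool)) n with hf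
  have hmono : Antitone (fun k => f (k + d)) := by
    apply antitone_nat_of_succ_le
    intro k
    have := CubeDensity.antitone_step (n := k + d)
      ({fun _ => false} : Set (Fin d → Bool)) (Nat.le_add_left d k)
    simpa [hf, Nat.add_right_comm] using this
  have hbdd : BddBelow (Set.range fun k => f (k + d)) := by
    refine ⟨0, ?_⟩
    rintro x ⟨k, rfl⟩
    exact CubeDensity.exD_nonneg _
  refine ⟨⨅ k, f (k + d), ?_, ?_⟩
  · exact (Filter.tendsto_add_atTop_iff_nat d).1 (tendsto_atTop_ciInf hmono hbdd)
  · exact le_ciInf (fun k => CubeDensity.lower_bound hd (Nat.le_add_left d k))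
end

section
/- Let G be a simple graph and let uv be an edge of G. Define the auxiliary graph F on vertex set V(G) \ {u,v} in which distinct vertices x and y are adjacent if and only if the 4-element set {u,v,x,y} induces a subgraph of G isomorphic to K_{2,2}. Then F is triangle-free. -/
/-- Given a graph `G` and an edge `uv`, the auxiliary graph on `V(G) \ {u,v}` in which
`x` and `y` are adjacent iff `{u,v,x,y}` induces a copy of `K_{2,2}` in `G`. -/
def auxGraph {V : Type} (G : SimpleGraph V) (u v : V) :
    SimpleGraph {x : V // x ≠ u ∧ x ≠ v} :=
  SimpleGraph.fromRel (fun x y =>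
    Nonempty (G.induce ({u, v, x.1, y.1} : Set V) ≃g completeBipartiteGraph (Fin 2) (Fin 2)))

set_option synthInstance.maxSize 2000 in
set_option maxHeartbeats 1000000 in
lemma K22_xor : ∀ a b c d : Fin 2 ⊕ Fin 2, a ≠ b → a ≠ c → a ≠ d → b ≠ c → b ≠ d → c ≠ d →
    (completeBipartiteGraph (Fin 2) (Fin 2)).Adj a b →
    Xor' ((completeBipartiteGraph (Fin 2) (Fin 2)).Adj a c)
      ((completeBipartiteGraph (Fin 2) (Fin 2)).Adj a d) := by
  simp only [completeBipartiteGraph, Xor']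
  decide

lemma key {V : Type} (G : SimpleGraph V) {u v x y : V} (huv : G.Adj u v)
    (hxu : x ≠ u) (hxv : x ≠ v) (hyu : y ≠ u) (hyv : y ≠ v) (hxy : x ≠ y)
    (h : Nonempty (G.induce ({u, v, x, y} : Set V) ≃g completeBipartiteGraph (Fin 2) (Fin 2))) :
    Xor' (G.Adj u x) (G.Adj u y) := by
  obtain ⟨e⟩ := h
  have hu : u ∈ ({u, v, x, y} : Set V) := by simp
  have hv : v ∈ ({u, v, x, y} : Set V) := by simp
  have hx : x ∈ ({u, v, x, y} : Set V) := by simp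
  have hy : y ∈ ({u, v, x, y} : Set V) := by simp
  have huvne : u ≠ v := huv.ne
  have inj := e.injective
  have hAdj : ∀ (a b : V) (ha : a ∈ ({u, v, x, y} : Set V)) (hb : b ∈ ({u, v, x, y} : Set V)),
      (completeBipartiteGraph (Fin 2) (Fin 2)).Adj (e ⟨a, ha⟩) (e ⟨b, hb⟩) ↔ G.Adj a b := by
    intro a b ha hb
    rw [e.map_adj_iff]
    simp [SimpleGraph.comap]
  have hne : ∀ (a b : V) (ha : a ∈ ({u, v, x, y} : Set V)) (hb : b ∈ ({u, v, x, y} : Set V)),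
      a ≠ b → e ⟨a, ha⟩ ≠ e ⟨b, hb⟩ := by
    intro a b ha hb hab he
    apply hab
    have := inj he
    exact congrArg Subtype.val this
  have h1 := K22_xor (e ⟨u, hu⟩) (e ⟨v, hv⟩) (e ⟨x, hx⟩) (e ⟨y, hy⟩)
    (hne _ _ _ _ huvne) (hne _ _ _ _ hxu.symm) (hne _ _ _ _ hyu.symm)
    (hne _ _ _ _ hxv.symm) (hne _ _ _ _ hyv.symm) (hne _ _ _ _ hxy)
    ((hAdj _ _ _ _).mpr huv)
  rwa [hAdj, hAdj] at h1

lemma key' {V : Type} (G : SimpleGraph V) {u v : V} (huv : G.Adj u v)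
    {x y : {x : V // x ≠ u ∧ x ≠ v}} (h : (auxGraph G u v).Adj x y) :
    Xor' (G.Adj u x.1) (G.Adj u y.1) := by
  obtain ⟨hne, h | h⟩ := h
  · exact key G huv x.2.1 x.2.2 y.2.1 y.2.2 (fun h' => hne (Subtype.ext h')) h
  · exact (key G huv y.2.1 y.2.2 x.2.1 x.2.2 (fun h' => hne (Subtype.ext h'.symm)) h).symm

/-- If `uv` is an edge of `G`, then the auxiliary graph whose edges are the pairs `{x,y}`
such that `{u,v,x,y}` induces `K_{2,2}` in `G` is triangle-free. -/
theorem auxGraph_triangleFree {V : Type} (G : SimpleGraph V) (u v : V) (huv : G.Adj u v) :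
    (auxGraph G u v).CliqueFree 3 := by
  classical
  intro s hs
  rw [SimpleGraph.is3Clique_iff] at hs
  obtain ⟨a, b, c, hab, hac, hbc, rfl⟩ := hs
  have h1 := key' G huv hab
  have h2 := key' G huv hac
  have h3 := key' G huv hbc
  unfold Xor' Xor at h1 h2 h3
  tauto
end
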